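/- Every window of the lattice α-helix of length N ≥ 5 satisfies Φ = 1; that is, for every 3 ≤ i ≤ N−2, the 5-tuple (H(i−2),…,H(i+2)) or its reversal is equivalent, by a lattice rotation and translation, to conformation 1 or to conformation 2. Consequently the α-helix is a minimal conformation with E₅ = −(N−4). -/
import Mathlib


/-- Points of the cubic lattice `ℤ³`. -/
abbrev P3 : Type := Fin 3 → ℤ

def e1 : P3 := ![1, 0, 0]
def e2 : P3 := ![0, 1, 0]
def e3 : P3 := ![0, 0, 1]

/-- Squared Euclidean norm of an integer vector; it equals `1` iff the
Euclidean norm equals `1`. -/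
def sqNorm (v : P3) : ℤ := ∑ k, (v k) ^ 2

/-- A conformation of length `N`: an injective map on `{1, …, N}` whose
consecutive steps have Euclidean length one. -/
def IsConformation (N : ℕ) (Γ : ℕ → P3) : Prop :=
  Set.InjOn Γ (Set.Icc 1 N) ∧ ∀ i, 1 ≤ i → i < N → sqNorm (Γ (i + 1) - Γ i) = 1

/-- A lattice rotation: an orthogonal integer matrix of determinant one
(equivalently, a linear isometry of `ℝ³` mapping `ℤ³` onto `ℤ³` with
determinant one). -/
def IsLatticeRotation (R : Matrix (Fin 3) (Fin 3) ℤ) : Prop :=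
  R.transpose * R = 1 ∧ R.det = 1

/-- Equivalence of length-5 conformations: `Δ' k = R (Δ k) + t` for a lattice
rotation `R` and translation `t ∈ ℤ³`. -/
def Equiv5 (Δ Δ' : Fin 5 → P3) : Prop :=
  ∃ (R : Matrix (Fin 3) (Fin 3) ℤ) (t : P3),
    IsLatticeRotation R ∧ ∀ k, Δ' k = R.mulVec (Δ k) + t

/-- Reversal of a length-5 conformation (`k ↦ Δ (6 - k)` in 1-based indexing). -/
def rev5 (Δ : Fin 5 → P3) : Fin 5 → P3 := fun k => Δ k.rev

/-- Conformation 1: vertices (0,0,0), (1,0,0), (1,1,0), (0,1,0), (0,1,1). -/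
def conf1 : Fin 5 → P3 := ![![0, 0, 0], ![1, 0, 0], ![1, 1, 0], ![0, 1, 0], ![0, 1, 1]]

/-- Conformation 2: vertices (0,0,0), (0,1,0), (−1,1,0), (−1,1,1), (−1,0,1). -/
def conf2 : Fin 5 → P3 := ![![0, 0, 0], ![0, 1, 0], ![-1, 1, 0], ![-1, 1, 1], ![-1, 0, 1]]

/-- The `i`-th window of `Γ`: the 5-tuple `(Γ(i-2), …, Γ(i+2))`. -/
def window (Γ : ℕ → P3) (i : ℕ) : Fin 5 → P3 := fun k => Γ (i - 2 + (k : ℕ))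

/-- `Φ(Δ) = 1`: the 5-tuple `Δ` or its reversal is equivalent to
conformation 1 or to conformation 2. -/
def WindowGood (Δ : Fin 5 → P3) : Prop :=
  Equiv5 Δ conf1 ∨ Equiv5 (rev5 Δ) conf1 ∨ Equiv5 Δ conf2 ∨ Equiv5 (rev5 Δ) conf2

open Classical in
/-- The function `Φ` on length-5 conformations. -/
noncomputable def Phi (Δ : Fin 5 → P3) : ℤ := if WindowGood Δ then 1 else 0

/-- The energy `E₅(Γ) = −Σ_{i=3}^{N−2} Φ(Γ_i)`. -/
noncomputable def E5 (N : ℕ) (Γ : ℕ → P3) : ℤ :=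
  -∑ i ∈ Finset.Icc 3 (N - 2), Phi (window Γ i)

/-- A minimal conformation: a conformation all of whose windows satisfy `Φ = 1`. -/
def IsMinimal (N : ℕ) (Γ : ℕ → P3) : Prop :=
  IsConformation N Γ ∧ ∀ i, 3 ≤ i → i ≤ N - 2 → WindowGood (window Γ i)

/-- The walk starting at the origin (in 1-based indexing) whose steps
cyclically repeat the given list. -/
def cyclicWalk (steps : List P3) : ℕ → P3
  | 0 => 0
  | 1 => 0
  | n + 2 => cyclicWalk steps (n + 1) + steps.getD (n % steps.length) 0

/-- The 16-term step sequence of the lattice α-helix. -/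
def alphaStepList : List P3 :=
  [e1, e2, -e1, e3, -e2, e1, e2, e3, -e1, -e2, e1, e3, e2, -e1, -e2, e3]

/-- The 4-term step sequence of the lattice β-strand. -/
def betaStepList : List P3 := [e1, e2, -e1, e3]

/-- The lattice α-helix (`H(1) = 0`, steps cyclically repeating `alphaStepList`). -/
def alphaHelix : ℕ → P3 := cyclicWalk alphaStepList

/-- The lattice β-strand (`B(1) = 0`, steps cyclically repeating `betaStepList`). -/
def betaStrand : ℕ → P3 := cyclicWalk betaStepList

/-- The four directed types of windows. -/
inductive DType : Type
  | r1  -- →1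
  | l1  -- ←1
  | r2  -- →2
  | l2  -- ←2
deriving DecidableEq

/-- A window `Δ` has directed type `→1` (resp. `→2`) if it is equivalent to
conformation 1 (resp. 2), and `←1` (resp. `←2`) if its reversal is. -/
def HasType (Δ : Fin 5 → P3) : DType → Prop
  | DType.r1 => Equiv5 Δ conf1
  | DType.l1 => Equiv5 (rev5 Δ) conf1
  | DType.r2 => Equiv5 Δ conf2
  | DType.l2 => Equiv5 (rev5 Δ) conf2

/-- The six allowed ordered pairs of directed types of consecutive windows:
(→1,←1), (←1,→1), (→1,→2), (→2,←2), (←2,←1), (←2,→2). -/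
def allowedPairs : List (DType × DType) :=
  [(DType.r1, DType.l1), (DType.l1, DType.r1), (DType.r1, DType.r2),
   (DType.r2, DType.l2), (DType.l2, DType.l1), (DType.l2, DType.r2)]

/-- `w` is the type sequence of `Γ` (a conformation of length `N`):
`w` has length `N − 4` and its `j`-th letter is the directed type of the
window `Γ_{3+j}`, `j = 0, …, N−5`. -/
def HasTypeSeq (N : ℕ) (Γ : ℕ → P3) (w : List DType) : Prop :=
  w.length = N - 4 ∧ ∀ j (h : j < w.length), HasType (window Γ (3 + j)) (w.get ⟨j, h⟩)

/-- The word `α = →1→2←2←1`. -/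
def wordAlpha : List DType := [DType.r1, DType.r2, DType.l2, DType.l1]

/-- The word `β = →1←1`. -/
def wordBeta : List DType := [DType.r1, DType.l1]

/-- `v` is a finite concatenation of copies of the words `α` and `β`. -/
def IsABConcat (v : List DType) : Prop :=
  ∃ L : List (List DType), (∀ u ∈ L, u = wordAlpha ∨ u = wordBeta) ∧ v = L.flatten

/-- A word is admissible if it is a contiguous subword (factor) of some finite
concatenation of copies of `α` and `β`. -/
def Admissible (w : List DType) : Prop := ∃ v, IsABConcat v ∧ w <:+: v

/-- The two kinds of monomers. -/
inductive AB : Type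
  | A
  | B
deriving DecidableEq

/-- The number of occurrences of the letter `c` in the `i`-th 5-tuple
`S(i−2), …, S(i+2)` of the sequence `S`. -/
def countLetter (c : AB) (S : ℕ → AB) (i : ℕ) : ℕ :=
  ((Finset.Icc (i - 2) (i + 2)).filter fun k => S k = c).card

open Classical in
/-- `Φ₁(Δ) = 1` iff `Δ` or its reversal is equivalent to conformation 1. -/
noncomputable def Phi1 (Δ : Fin 5 → P3) : ℝ :=
  if Equiv5 Δ conf1 ∨ Equiv5 (rev5 Δ) conf1 then 1 else 0

open Classical in
/-- `Φ₂(Δ) = 1` iff `Δ` or its reversal is equivalent to conformation 2. -/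
noncomputable def Phi2 (Δ : Fin 5 → P3) : ℝ :=
  if Equiv5 Δ conf2 ∨ Equiv5 (rev5 Δ) conf2 then 1 else 0

/-- The heteropolymer energy
`E₅′(S,Γ) = −Σᵢ [#_B(Sᵢ)(Φ₁(Γᵢ) + ε Φ₂(Γᵢ)) + #_A(Sᵢ)(Φ₂(Γᵢ) + ε Φ₁(Γᵢ))]`. -/
noncomputable def E5' (ε : ℝ) (S : ℕ → AB) (N : ℕ) (Γ : ℕ → P3) : ℝ :=
  -∑ i ∈ Finset.Icc 3 (N - 2),
    ((countLetter AB.B S i : ℝ) * (Phi1 (window Γ i) + ε * Phi2 (window Γ i)) +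
      (countLetter AB.A S i : ℝ) * (Phi2 (window Γ i) + ε * Phi1 (window Γ i)))


-- Auxiliary lemmas for the α-helix

lemma helix_step (m : ℕ) :
    alphaHelix (m+2) = alphaHelix (m+1) + alphaStepList.getD (m % 16) 0 := rfl

lemma helix_per (m : ℕ) : alphaHelix (m+17) = alphaHelix (m+1) + ![0,0,4] := by
  induction m with
  | zero => decide
  | succ n ih =>
      have h1 : alphaHelix (n+18) = alphaHelix (n+17) + alphaStepList.getD (n % 16) 0 := by
        have := helix_step (n+16)
        rwa [Nat.add_mod_right] at this
      have h2 : alphaHelix (n+2) = alphaHelix (n+1) + alphaStepList.getD (n % 16) 0 :=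
        helix_step n
      rw [show n+1+17 = n+18 from rfl, h1, ih, show n+1+1 = n+2 from rfl, h2]
      abel

lemma helix_perq (q m : ℕ) :
    alphaHelix (m+1+16*q) = alphaHelix (m+1) + ![0,0,4*(q:ℤ)] := by
  induction q with
  | zero =>
      funext j
      fin_cases j <;> simp
  | succ n ih =>
      rw [show m+1+16*(n+1) = (m+16*n)+17 by ring, helix_per (m+16*n),
        show m+16*n+1 = m+1+16*n by ring, ih, add_assoc]
      congr 1
      funext j
      fin_cases j <;> simp <;> push_cast <;> ring

lemma equiv5_shift {Δ c : Fin 5 → P3} (u : P3) (h : Equiv5 Δ c) :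
    Equiv5 (fun k => Δ k + u) c := by
  obtain ⟨R, t, hR, he⟩ := h
  refine ⟨R, t - R.mulVec u, hR, fun k => ?_⟩
  rw [Matrix.mulVec_add, he k]
  abel

lemma windowGood_shift {Δ : Fin 5 → P3} (u : P3) (h : WindowGood Δ) :
    WindowGood (fun k => Δ k + u) := by
  have hrev : rev5 (fun k => Δ k + u) = fun k => rev5 Δ k + u := rfl
  rcases h with h|h|h|h
  · exact Or.inl (equiv5_shift u h)
  · exact Or.inr (Or.inl (by rw [hrev]; exact equiv5_shift u h))
  · exact Or.inr (Or.inr (Or.inl (equiv5_shift u h)))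
  · exact Or.inr (Or.inr (Or.inr (by rw [hrev]; exact equiv5_shift u h)))

lemma window_shift (i : ℕ) (hi : 3 ≤ i) :
    window alphaHelix (i+16) = fun k => window alphaHelix i k + ![0,0,4] := by
  funext k
  show alphaHelix (i+16-2+(k:ℕ)) = alphaHelix (i-2+(k:ℕ)) + _
  rw [show i+16-2+(k:ℕ) = (i-2+(k:ℕ)-1) + 17 by omega,
    show i-2+(k:ℕ) = (i-2+(k:ℕ)-1) + 1 by omega]
  exact helix_per _

lemma helix_window_good : ∀ i, 3 ≤ i → WindowGood (window alphaHelix i) := by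
  intro i
  induction i using Nat.strong_induction_on with
  | _ i ih =>
    intro hi
    by_cases h : i ≤ 18
    · interval_cases i
      · exact Or.inl ⟨!![1,0,0;0,1,0;0,0,1], ![0,0,0], ⟨by decide, by decide⟩, by decide⟩
      · exact Or.inr (Or.inr (Or.inl ⟨!![1,0,0;0,1,0;0,0,1], ![-1,0,0], ⟨by decide, by decide⟩, by decide⟩))
      · exact Or.inr (Or.inr (Or.inr ⟨!![0,-1,0;-1,0,0;0,0,-1], ![0,1,1], ⟨by decide, by decide⟩, by decide⟩))
      · exact Or.inr (Or.inl ⟨!![0,-1,0;-1,0,0;0,0,-1], ![1,1,1], ⟨by decide, by decide⟩, by decide⟩)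
      · exact Or.inl ⟨!![0,-1,0;1,0,0;0,0,1], ![1,0,-1], ⟨by decide, by decide⟩, by decide⟩
      · exact Or.inr (Or.inr (Or.inl ⟨!![0,-1,0;1,0,0;0,0,1], ![0,0,-1], ⟨by decide, by decide⟩, by decide⟩))
      · exact Or.inr (Or.inr (Or.inr ⟨!![-1,0,0;0,1,0;0,0,-1], ![0,0,2], ⟨by decide, by decide⟩, by decide⟩))
      · exact Or.inr (Or.inl ⟨!![-1,0,0;0,1,0;0,0,-1], ![1,0,2], ⟨by decide, by decide⟩, by decide⟩)
      · exact Or.inl ⟨!![-1,0,0;0,-1,0;0,0,1], ![1,1,-2], ⟨by decide, by decide⟩, by decide⟩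
      · exact Or.inr (Or.inr (Or.inl ⟨!![-1,0,0;0,-1,0;0,0,1], ![0,1,-2], ⟨by decide, by decide⟩, by decide⟩))
      · exact Or.inr (Or.inr (Or.inr ⟨!![0,1,0;1,0,0;0,0,-1], ![-1,0,3], ⟨by decide, by decide⟩, by decide⟩))
      · exact Or.inr (Or.inl ⟨!![0,1,0;1,0,0;0,0,-1], ![0,0,3], ⟨by decide, by decide⟩, by decide⟩)
      · exact Or.inl ⟨!![0,1,0;-1,0,0;0,0,1], ![0,1,-3], ⟨by decide, by decide⟩, by decide⟩
      · exact Or.inr (Or.inr (Or.inl ⟨!![0,1,0;-1,0,0;0,0,1], ![-1,1,-3], ⟨by decide, by decide⟩, by decide⟩))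
      · exact Or.inr (Or.inr (Or.inr ⟨!![1,0,0;0,-1,0;0,0,-1], ![-1,1,4], ⟨by decide, by decide⟩, by decide⟩))
      · exact Or.inr (Or.inl ⟨!![1,0,0;0,-1,0;0,0,-1], ![0,1,4], ⟨by decide, by decide⟩, by decide⟩)
    · push_neg at h
      have h3 : 3 ≤ i - 16 := by omega
      have hi' : i = (i-16) + 16 := by omega
      rw [hi', window_shift _ h3]
      exact windowGood_shift _ (ih (i-16) (by omega) h3)

lemma helix_sqNorm (i : ℕ) (hi : 1 ≤ i) :
    sqNorm (alphaHelix (i+1) - alphaHelix i) = 1 := by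
  obtain ⟨m, rfl⟩ : ∃ m, i = m + 1 := ⟨i - 1, by omega⟩
  rw [show m+1+1 = m+2 from rfl, helix_step m, add_sub_cancel_left]
  have hlt : m % 16 < 16 := Nat.mod_lt _ (by norm_num)
  have key : ∀ r : Fin 16, sqNorm (alphaStepList.getD (r:ℕ) 0) = 1 := by decide
  exact key ⟨m % 16, hlt⟩

lemma helix_injOn (N : ℕ) : Set.InjOn alphaHelix (Set.Icc 1 N) := by
  intro n hn m hm h
  have hn1 : 1 ≤ n := hn.1
  have hm1 : 1 ≤ m := hm.1
  obtain ⟨q, r, hr, hnqr⟩ : ∃ q r, r < 16 ∧ n = r + 1 + 16*q :=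
    ⟨(n-1)/16, (n-1)%16, Nat.mod_lt _ (by norm_num), by omega⟩
  obtain ⟨p, s, hs, hmps⟩ : ∃ p s, s < 16 ∧ m = s + 1 + 16*p :=
    ⟨(m-1)/16, (m-1)%16, Nat.mod_lt _ (by norm_num), by omega⟩
  rw [hnqr, hmps, helix_perq q r, helix_perq p s] at h
  have hz := congrFun h 2
  simp only [Pi.add_apply, Matrix.cons_val_two, Matrix.tail_cons, Matrix.head_cons] at hz
  have hb : ∀ a : Fin 16, 0 ≤ alphaHelix ((a:ℕ)+1) 2 ∧ alphaHelix ((a:ℕ)+1) 2 ≤ 3 := by decide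
  have hbr : 0 ≤ alphaHelix (r+1) 2 ∧ alphaHelix (r+1) 2 ≤ 3 := hb ⟨r, hr⟩
  have hbs : 0 ≤ alphaHelix (s+1) 2 ∧ alphaHelix (s+1) 2 ≤ 3 := hb ⟨s, hs⟩
  have hqp : q = p := by omega
  subst hqp
  have hpt : alphaHelix (r+1) = alphaHelix (s+1) := add_right_cancel h
  have key : ∀ a b : Fin 16, alphaHelix ((a:ℕ)+1) = alphaHelix ((b:ℕ)+1) → a = b := by decide
  have hab : (⟨r, hr⟩ : Fin 16) = ⟨s, hs⟩ := key ⟨r, hr⟩ ⟨s, hs⟩ hpt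
  have hrs : r = s := congrArg Fin.val hab
  omega

/-- Every window of the lattice α-helix of length `N ≥ 5`
satisfies `Φ = 1`; consequently the α-helix is a minimal conformation with
`E₅ = −(N−4)`. -/
theorem alphaHelix_minimal (N : ℕ) (hN : 5 ≤ N) :
    (∀ i, 3 ≤ i → i ≤ N - 2 → WindowGood (window alphaHelix i)) ∧
      IsMinimal N alphaHelix ∧ E5 N alphaHelix = -((N : ℤ) - 4) := by
  refine ⟨fun i hi _ => helix_window_good i hi,
    ⟨⟨helix_injOn N, fun i hi _ => helix_sqNorm i hi⟩,
      fun i hi _ => helix_window_good i hi⟩, ?_⟩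
  unfold E5
  have hone : ∀ i ∈ Finset.Icc 3 (N-2), Phi (window alphaHelix i) = 1 := by
    intro i hi
    simp only [Finset.mem_Icc] at hi
    unfold Phi
    rw [if_pos (helix_window_good i hi.1)]
  rw [Finset.sum_congr rfl hone, Finset.sum_const, Nat.card_Icc,
    show N - 2 + 1 - 3 = N - 4 by omega]
  simp only [nsmul_eq_mul, mul_one]
  omega
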